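/- arXiv:2405.01339 — 2 statements merged into one kernel-verified Lean document; each statement's English description precedes it below -/
import Mathlib

section
/- Let ε ∈ (0,1/2], let P ⊂ ℝ^d be a finite set partitioned into clusters C_1,…,C_k with centers a_1,…,a_k, and let μ be the sensitivity sampling distribution on P. If m ≥ 48·k·ε^{-2}·log(10k·ε^{-1}), then with probability at least 1 − ε³/k³ over the m i.i.d. samples q_1,…,q_m from μ (with weights w_{q_i} = 1/(m·μ(q_i))), the weighted sample Ω satisfies event E. -/
open Finset

noncomputable section

/-- `ℝ^d` as a Euclidean space. -/
abbrev Pt (d : ℕ) := EuclideanSpace ℝ (Fin d)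

/-- The sensitivity sampling distribution `μ` on `P`. -/
noncomputable def sensμ {d k : ℕ} (P : Finset (Pt d)) (cl : Pt d → Fin k)
    (a : Fin k → Pt d) (p : Pt d) : ℝ :=
  let Cj : Fin k → Finset (Pt d) := fun j => P.filter fun x => cl x = j
  let costC : Fin k → ℝ := fun j => ∑ x ∈ Cj j, ‖x - a j‖ ^ 2
  let costPA : ℝ := ∑ j : Fin k, costC j
  (1 / 4) * (1 / ((k : ℝ) * ((Cj (cl p)).card : ℝ))
    + ‖p - a (cl p)‖ ^ 2 / ((k : ℝ) * costC (cl p))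
    + ‖p - a (cl p)‖ ^ 2 / costPA
    + (costC (cl p) / ((Cj (cl p)).card : ℝ)) / costPA)

/-- `ℓ_max = ⌊log₂(1/ε)⌋`. -/
def lmax (ε : ℝ) : ℕ := (Int.log 2 ε⁻¹).toNat

/-- `p` belongs to the ring `R_j(ℓ)` of cluster `C_j = {x ∈ P | cl x = j}`
(with center `a j` and average cost `Δ_j`). -/
def inRing {d k : ℕ} (P : Finset (Pt d)) (cl : Pt d → Fin k) (a : Fin k → Pt d)
    (ε : ℝ) (j : Fin k) (ℓ : ℕ) (p : Pt d) : Prop :=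
  let Δ : ℝ := (∑ x ∈ P.filter (fun x => cl x = j), ‖x - a j‖ ^ 2) /
      (((P.filter fun x => cl x = j).card : ℝ))
  cl p = j ∧
    ((ℓ = 0 ∧ ‖p - a j‖ ^ 2 < 2 * Δ) ∨
     (1 ≤ ℓ ∧ ℓ ≤ lmax ε ∧
        2 ^ ℓ * Δ ≤ ‖p - a j‖ ^ 2 ∧ ‖p - a j‖ ^ 2 < 2 ^ (ℓ + 1) * Δ) ∨
     (ℓ = lmax ε + 1 ∧ 2 ^ (lmax ε + 1) * Δ ≤ ‖p - a j‖ ^ 2))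

/-- Event `E` for the weighted i.i.d. sample `q : Fin m → P` with weights
`w i = 1/(m·μ(q_i))`: (P1) cluster sizes, (P2) ring sizes and (P3) cluster costs
are preserved. -/
def EventE {d k : ℕ} (P : Finset (Pt d)) (cl : Pt d → Fin k) (a : Fin k → Pt d)
    (ε : ℝ) (m : ℕ) (q : Fin m → {x // x ∈ P}) : Prop :=
  let w : Fin m → ℝ := fun i => 1 / ((m : ℝ) * sensμ P cl a (q i).1)
  -- (P1) cluster size preservation
  (∀ j : Fin k,
    (1 - ε) * (((P.filter fun p => cl p = j).card : ℝ))
        ≤ (∑ i : Fin m, Set.indicator {i : Fin m | cl (q i).1 = j} w i) ∧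
    (∑ i : Fin m, Set.indicator {i : Fin m | cl (q i).1 = j} w i)
        ≤ (1 + ε) * (((P.filter fun p => cl p = j).card : ℝ))) ∧
  -- (P2) ring size preservation
  (∀ j : Fin k, ∀ ℓ ≤ lmax ε + 1,
    (∑ i : Fin m, Set.indicator {i : Fin m | inRing P cl a ε j ℓ (q i).1} w i)
      ≤ (((P.filter fun p => cl p = j).card : ℝ)) / 2 ^ ((ℓ : ℤ) - 1)) ∧
  -- (P3) cluster cost preservation
  (∀ j : Fin k,
    (1 - ε) * (∑ p ∈ P.filter (fun p => cl p = j), ‖p - a j‖ ^ 2)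
        ≤ (∑ i : Fin m, Set.indicator {i : Fin m | cl (q i).1 = j}
            (fun i => w i * ‖(q i).1 - a j‖ ^ 2) i) ∧
    (∑ i : Fin m, Set.indicator {i : Fin m | cl (q i).1 = j}
            (fun i => w i * ‖(q i).1 - a j‖ ^ 2) i)
        ≤ (1 + ε) * (∑ p ∈ P.filter (fun p => cl p = j), ‖p - a j‖ ^ 2))



namespace CoresetAux

lemma exp_interp {c B x : ℝ} (hB : 0 < B) (hx0 : 0 ≤ x) (hxB : x ≤ B) :
    Real.exp (c * x) ≤ 1 + x / B * (Real.exp (c * B) - 1) := by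
  have hθ1 : x / B ≤ 1 := (div_le_one hB).2 hxB
  have hθ0 : 0 ≤ x / B := div_nonneg hx0 hB.le
  have h := convexOn_exp.2 (Set.mem_univ (0:ℝ)) (Set.mem_univ (c * B))
      (show (0:ℝ) ≤ 1 - x / B by linarith) hθ0 (show (1 - x / B) + x / B = 1 by ring)
  simp only [smul_eq_mul, mul_zero, zero_add, Real.exp_zero] at h
  have hx : x / B * (c * B) = c * x := by field_simp
  rw [hx] at h
  linarith [h]

lemma exp_quad {x : ℝ} (h0 : 0 ≤ x) (h1 : x ≤ 1/2) :
    Real.exp x ≤ 1 + x + (11/18) * x^2 := by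
  have hb := Real.exp_bound (x := x) (by rw [abs_of_nonneg h0]; linarith) (n := 3) (by norm_num)
  have hs : ∑ m ∈ range 3, x ^ m / (m.factorial : ℝ) = 1 + x + x^2/2 := by
    simp [Finset.sum_range_succ, Nat.factorial]
    try ring
  rw [hs, abs_of_nonneg h0] at hb
  norm_num [Nat.factorial] at hb
  have := abs_le.1 hb
  nlinarith [this.2, sq_nonneg x]

lemma exp_quad_neg {x : ℝ} (h0 : 0 ≤ x) (h1 : x ≤ 1/2) :
    Real.exp (-x) ≤ 1 - x + (11/18) * x^2 := by
  have hb := Real.exp_bound (x := -x) (by rw [abs_neg, abs_of_nonneg h0]; linarith) (n := 3) (by norm_num)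
  have hs : ∑ m ∈ range 3, (-x) ^ m / (m.factorial : ℝ) = 1 - x + x^2/2 := by
    simp [Finset.sum_range_succ, Nat.factorial]
    try ring
  rw [hs, abs_neg, abs_of_nonneg h0] at hb
  norm_num [Nat.factorial] at hb
  have := abs_le.1 hb
  nlinarith [this.2, sq_nonneg x]

variable {α : Type*} [Fintype α]

lemma sum_prod_pow (m : ℕ) (h : α → ℝ) :
    ∑ q : Fin m → α, ∏ i, h (q i) = (∑ p, h p) ^ m := by
  classical
  have := Finset.prod_univ_sum (t := fun _ : Fin m => (univ : Finset α))
    (f := fun _ p => h p)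
  rw [Fintype.piFinset_univ] at this
  rw [← this, Finset.prod_const, card_univ, Fintype.card_fin]

lemma mgf_bound (μ f : α → ℝ) (hμ0 : ∀ p, 0 ≤ μ p) (hμ1 : ∑ p, μ p = 1)
    (c B : ℝ) (hB : 0 < B) (hf0 : ∀ p, 0 ≤ f p) (hfB : ∀ p, f p ≤ B) :
    ∑ p, μ p * Real.exp (c * f p)
      ≤ Real.exp ((Real.exp (c * B) - 1) / B * ∑ p, μ p * f p) := by
  have h1 : ∑ p, μ p * Real.exp (c * f p)
      ≤ ∑ p, (μ p + (Real.exp (c * B) - 1) / B * (μ p * f p)) := by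
    apply Finset.sum_le_sum
    intro p _
    have := exp_interp (c := c) hB (hf0 p) (hfB p)
    have h2 : μ p * Real.exp (c * f p) ≤ μ p * (1 + f p / B * (Real.exp (c * B) - 1)) :=
      mul_le_mul_of_nonneg_left this (hμ0 p)
    calc μ p * Real.exp (c * f p) ≤ μ p * (1 + f p / B * (Real.exp (c * B) - 1)) := h2
      _ = μ p + (Real.exp (c * B) - 1) / B * (μ p * f p) := by ring
  rw [Finset.sum_add_distrib, hμ1, ← Finset.mul_sum] at h1
  calc ∑ p, μ p * Real.exp (c * f p)
      ≤ 1 + (Real.exp (c * B) - 1) / B * ∑ p, μ p * f p := h1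
    _ ≤ Real.exp ((Real.exp (c * B) - 1) / B * ∑ p, μ p * f p) := by
        have := Real.add_one_le_exp ((Real.exp (c * B) - 1) / B * ∑ p, μ p * f p)
        linarith

lemma exp_sum_prod (μ f : α → ℝ) (m : ℕ) (c : ℝ) :
    ∑ q : Fin m → α, Real.exp (c * ∑ i, f (q i)) * ∏ i, μ (q i)
      = (∑ p, μ p * Real.exp (c * f p)) ^ m := by
  rw [← sum_prod_pow m (fun p => μ p * Real.exp (c * f p))]
  apply Finset.sum_congr rfl
  intro q _
  rw [Finset.prod_mul_distrib, Finset.mul_sum, Real.exp_sum]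
  ring

lemma chernoff_ub (μ f : α → ℝ) (hμ0 : ∀ p, 0 ≤ μ p) (hμ1 : ∑ p, μ p = 1)
    (m : ℕ) (B lam t : ℝ) (hB : 0 < B) (hlam : 0 ≤ lam)
    (hf0 : ∀ p, 0 ≤ f p) (hfB : ∀ p, f p ≤ B) :
    ∑ q : Fin m → α, Set.indicator {q | t ≤ ∑ i, f (q i)} (fun q => ∏ i, μ (q i)) q
      ≤ Real.exp (-(lam * t) + m * ((Real.exp (lam * B) - 1) / B * ∑ p, μ p * f p)) := by
  classical
  have hμprod : ∀ q : Fin m → α, 0 ≤ ∏ i, μ (q i) :=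
    fun q => Finset.prod_nonneg fun i _ => hμ0 _
  have step1 : ∀ q : Fin m → α,
      Set.indicator {q : Fin m → α | t ≤ ∑ i, f (q i)} (fun q => ∏ i, μ (q i)) q
        ≤ Real.exp (-(lam * t)) * (Real.exp (lam * ∑ i, f (q i)) * ∏ i, μ (q i)) := by
    intro q
    by_cases hq : q ∈ {q : Fin m → α | t ≤ ∑ i, f (q i)}
    · rw [Set.indicator_of_mem hq]
      rw [← mul_assoc, ← Real.exp_add]
      nth_rewrite 1 [← one_mul (∏ i, μ (q i))]
      apply mul_le_mul_of_nonneg_right _ (hμprod q)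
      apply Real.one_le_exp
      have : t ≤ ∑ i, f (q i) := hq
      nlinarith
    · rw [Set.indicator_of_notMem hq]
      exact mul_nonneg (Real.exp_nonneg _) (mul_nonneg (Real.exp_nonneg _) (hμprod q))
  calc ∑ q : Fin m → α, Set.indicator {q : Fin m → α | t ≤ ∑ i, f (q i)} (fun q => ∏ i, μ (q i)) q
      ≤ ∑ q : Fin m → α, Real.exp (-(lam * t)) * (Real.exp (lam * ∑ i, f (q i)) * ∏ i, μ (q i)) :=
        Finset.sum_le_sum fun q _ => step1 q
    _ = Real.exp (-(lam * t)) * (∑ p, μ p * Real.exp (lam * f p)) ^ m := by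
        rw [← Finset.mul_sum, exp_sum_prod]
    _ ≤ Real.exp (-(lam * t)) *
        (Real.exp ((Real.exp (lam * B) - 1) / B * ∑ p, μ p * f p)) ^ m := by
        apply mul_le_mul_of_nonneg_left _ (Real.exp_nonneg _)
        apply pow_le_pow_left₀
        · exact Finset.sum_nonneg fun p _ => mul_nonneg (hμ0 p) (Real.exp_nonneg _)
        · exact mgf_bound μ f hμ0 hμ1 lam B hB hf0 hfB
    _ = Real.exp (-(lam * t) + m * ((Real.exp (lam * B) - 1) / B * ∑ p, μ p * f p)) := by
        rw [← Real.exp_nat_mul, ← Real.exp_add]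

lemma chernoff_lb (μ f : α → ℝ) (hμ0 : ∀ p, 0 ≤ μ p) (hμ1 : ∑ p, μ p = 1)
    (m : ℕ) (B lam t : ℝ) (hB : 0 < B) (hlam : 0 ≤ lam)
    (hf0 : ∀ p, 0 ≤ f p) (hfB : ∀ p, f p ≤ B) :
    ∑ q : Fin m → α, Set.indicator {q | ∑ i, f (q i) ≤ t} (fun q => ∏ i, μ (q i)) q
      ≤ Real.exp (lam * t + m * ((Real.exp (-lam * B) - 1) / B * ∑ p, μ p * f p)) := by
  classical
  have hμprod : ∀ q : Fin m → α, 0 ≤ ∏ i, μ (q i) :=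
    fun q => Finset.prod_nonneg fun i _ => hμ0 _
  have step1 : ∀ q : Fin m → α,
      Set.indicator {q : Fin m → α | ∑ i, f (q i) ≤ t} (fun q => ∏ i, μ (q i)) q
        ≤ Real.exp (lam * t) * (Real.exp (-lam * ∑ i, f (q i)) * ∏ i, μ (q i)) := by
    intro q
    by_cases hq : q ∈ {q : Fin m → α | ∑ i, f (q i) ≤ t}
    · rw [Set.indicator_of_mem hq]
      rw [← mul_assoc, ← Real.exp_add]
      nth_rewrite 1 [← one_mul (∏ i, μ (q i))]
      apply mul_le_mul_of_nonneg_right _ (hμprod q)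
      apply Real.one_le_exp
      have : ∑ i, f (q i) ≤ t := hq
      nlinarith
    · rw [Set.indicator_of_notMem hq]
      exact mul_nonneg (Real.exp_nonneg _) (mul_nonneg (Real.exp_nonneg _) (hμprod q))
  calc ∑ q : Fin m → α, Set.indicator {q : Fin m → α | ∑ i, f (q i) ≤ t} (fun q => ∏ i, μ (q i)) q
      ≤ ∑ q : Fin m → α, Real.exp (lam * t) * (Real.exp (-lam * ∑ i, f (q i)) * ∏ i, μ (q i)) :=
        Finset.sum_le_sum fun q _ => step1 q
    _ = Real.exp (lam * t) * (∑ p, μ p * Real.exp (-lam * f p)) ^ m := by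
        rw [← Finset.mul_sum, exp_sum_prod]
    _ ≤ Real.exp (lam * t) *
        (Real.exp ((Real.exp (-lam * B) - 1) / B * ∑ p, μ p * f p)) ^ m := by
        apply mul_le_mul_of_nonneg_left _ (Real.exp_nonneg _)
        apply pow_le_pow_left₀
        · exact Finset.sum_nonneg fun p _ => mul_nonneg (hμ0 p) (Real.exp_nonneg _)
        · exact mgf_bound μ f hμ0 hμ1 (-lam) B hB hf0 hfB
    _ = Real.exp (lam * t + m * ((Real.exp (-lam * B) - 1) / B * ∑ p, μ p * f p)) := by
        rw [← Real.exp_nat_mul, ← Real.exp_add]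

end CoresetAux

namespace CoresetAux
variable {α : Type*} [Fintype α]

lemma tail_up (μ f : α → ℝ) (hμ0 : ∀ p, 0 ≤ μ p) (hμ1 : ∑ p, μ p = 1)
    (m k : ℕ) (ε T : ℝ) (hk : 0 < k) (hm : 0 < m) (hT : 0 < T)
    (hε0 : 0 < ε) (hε1 : ε ≤ 1/2)
    (hf0 : ∀ p, 0 ≤ f p) (hfB : ∀ p, f p ≤ 4 * k * T / m)
    (hmean : ∑ p, μ p * f p = T / m) :
    ∑ q : Fin m → α, Set.indicator {q | (1 + ε) * T ≤ ∑ i, f (q i)}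
        (fun q => ∏ i, μ (q i)) q
      ≤ Real.exp (-((7:ℝ)/72) * (ε^2 * m / k)) := by
  have hk' : (0:ℝ) < k := Nat.cast_pos.2 hk
  have hm' : (0:ℝ) < m := Nat.cast_pos.2 hm
  have hB : (0:ℝ) < 4 * k * T / m := by positivity
  have hlam : (0:ℝ) ≤ ε * m / (4 * k * T) := by positivity
  have h := chernoff_ub μ f hμ0 hμ1 m (4 * k * T / m) (ε * m / (4 * k * T))
    ((1 + ε) * T) hB hlam hf0 hfB
  refine h.trans (Real.exp_le_exp.2 ?_)
  rw [hmean]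
  have hlamB : ε * m / (4 * k * T) * (4 * k * T / m) = ε := by
    field_simp
  rw [hlamB]
  have heq : -(ε * m / (4 * k * T) * ((1 + ε) * T)) +
      m * ((Real.exp ε - 1) / (4 * k * T / m) * (T / m))
      = m / (4 * k) * (Real.exp ε - 1 - ε - ε^2) := by
    field_simp
    ring
  rw [heq]
  have hq := exp_quad hε0.le hε1
  have h1 : Real.exp ε - 1 - ε - ε^2 ≤ -((7:ℝ)/18) * ε^2 := by nlinarith
  calc (m:ℝ) / (4 * k) * (Real.exp ε - 1 - ε - ε^2)
      ≤ m / (4 * k) * (-((7:ℝ)/18) * ε^2) := by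
        apply mul_le_mul_of_nonneg_left h1 (by positivity)
    _ = -((7:ℝ)/72) * (ε^2 * m / k) := by field_simp; ring

lemma tail_low (μ f : α → ℝ) (hμ0 : ∀ p, 0 ≤ μ p) (hμ1 : ∑ p, μ p = 1)
    (m k : ℕ) (ε T : ℝ) (hk : 0 < k) (hm : 0 < m) (hT : 0 < T)
    (hε0 : 0 < ε) (hε1 : ε ≤ 1/2)
    (hf0 : ∀ p, 0 ≤ f p) (hfB : ∀ p, f p ≤ 4 * k * T / m)
    (hmean : ∑ p, μ p * f p = T / m) :
    ∑ q : Fin m → α, Set.indicator {q | ∑ i, f (q i) ≤ (1 - ε) * T}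
        (fun q => ∏ i, μ (q i)) q
      ≤ Real.exp (-((7:ℝ)/72) * (ε^2 * m / k)) := by
  have hk' : (0:ℝ) < k := Nat.cast_pos.2 hk
  have hm' : (0:ℝ) < m := Nat.cast_pos.2 hm
  have hB : (0:ℝ) < 4 * k * T / m := by positivity
  have hlam : (0:ℝ) ≤ ε * m / (4 * k * T) := by positivity
  have h := chernoff_lb μ f hμ0 hμ1 m (4 * k * T / m) (ε * m / (4 * k * T))
    ((1 - ε) * T) hB hlam hf0 hfB
  refine h.trans (Real.exp_le_exp.2 ?_)
  rw [hmean]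
  have hlamB : -(ε * m / (4 * k * T)) * (4 * k * T / m) = -ε := by
    field_simp
  rw [hlamB]
  have heq : ε * m / (4 * k * T) * ((1 - ε) * T) +
      m * ((Real.exp (-ε) - 1) / (4 * k * T / m) * (T / m))
      = m / (4 * k) * (Real.exp (-ε) - 1 + ε - ε^2) := by
    field_simp
    ring
  rw [heq]
  have hq := exp_quad_neg hε0.le hε1
  have h1 : Real.exp (-ε) - 1 + ε - ε^2 ≤ -((7:ℝ)/18) * ε^2 := by nlinarith
  calc (m:ℝ) / (4 * k) * (Real.exp (-ε) - 1 + ε - ε^2)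
      ≤ m / (4 * k) * (-((7:ℝ)/18) * ε^2) := by
        apply mul_le_mul_of_nonneg_left h1 (by positivity)
    _ = -((7:ℝ)/72) * (ε^2 * m / k) := by field_simp; ring

lemma tail_ring (μ f : α → ℝ) (hμ0 : ∀ p, 0 ≤ μ p) (hμ1 : ∑ p, μ p = 1)
    (m k : ℕ) (ν : ℝ) (hk : 0 < k) (hm : 0 < m) (hν : 0 < ν)
    (hf0 : ∀ p, 0 ≤ f p) (hfB : ∀ p, f p ≤ 4 * k * ν / m)
    (hmean : ∑ p, μ p * f p ≤ ν / m) :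
    ∑ q : Fin m → α, Set.indicator {q | 2 * ν ≤ ∑ i, f (q i)}
        (fun q => ∏ i, μ (q i)) q
      ≤ Real.exp (-((m:ℝ) / (16 * k))) := by
  have hk' : (0:ℝ) < k := Nat.cast_pos.2 hk
  have hm' : (0:ℝ) < m := Nat.cast_pos.2 hm
  have hB : (0:ℝ) < 4 * k * ν / m := by positivity
  have hlam : (0:ℝ) ≤ m / (4 * k * ν) := by positivity
  have h := chernoff_ub μ f hμ0 hμ1 m (4 * k * ν / m) (m / (4 * k * ν)) (2 * ν)
    hB hlam hf0 hfB
  refine h.trans (Real.exp_le_exp.2 ?_)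
  have hlamB : (m:ℝ) / (4 * k * ν) * (4 * k * ν / m) = 1 := by field_simp
  rw [hlamB]
  have hmean0 : (0:ℝ) ≤ ∑ p, μ p * f p :=
    Finset.sum_nonneg fun p _ => mul_nonneg (hμ0 p) (hf0 p)
  have hone : (1:ℝ) ≤ Real.exp 1 := Real.one_le_exp zero_le_one
  have he : Real.exp 1 < 2.7182818286 := Real.exp_one_lt_d9
  have hC : (0:ℝ) ≤ (Real.exp 1 - 1) / (4 * k * ν / m) := by
    apply div_nonneg _ hB.le
    linarith
  calc -((m:ℝ) / (4 * k * ν) * (2 * ν)) +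
        m * ((Real.exp 1 - 1) / (4 * k * ν / m) * ∑ p, μ p * f p)
      ≤ -((m:ℝ) / (4 * k * ν) * (2 * ν)) +
        m * ((Real.exp 1 - 1) / (4 * k * ν / m) * (ν / m)) := by
        apply add_le_add_right
        apply mul_le_mul_of_nonneg_left _ hm'.le
        exact mul_le_mul_of_nonneg_left hmean hC
    _ = (m:ℝ) / (4 * k) * (Real.exp 1 - 3) := by field_simp; ring
    _ ≤ -((m:ℝ) / (16 * k)) := by
        have h3 : Real.exp 1 - 3 ≤ -(1/4) := by nlinarith
        calc (m:ℝ) / (4 * k) * (Real.exp 1 - 3)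
            ≤ (m:ℝ) / (4 * k) * (-(1/4)) :=
              mul_le_mul_of_nonneg_left h3 (by positivity)
          _ = -((m:ℝ) / (16 * k)) := by ring

end CoresetAux

namespace CoresetAux

variable {d k : ℕ} (P : Finset (Pt d)) (cl : Pt d → Fin k) (a : Fin k → Pt d)

/-- cluster size as a real number -/
def nn (j : Fin k) : ℝ := ((P.filter fun x => cl x = j).card : ℝ)

/-- cluster cost -/
def cC (j : Fin k) : ℝ := ∑ x ∈ P.filter (fun x => cl x = j), ‖x - a j‖ ^ 2

/-- total cost -/
def cP : ℝ := ∑ j, cC P cl a j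

lemma sens_eq (x : Pt d) :
    sensμ P cl a x = 1/4 * (1/((k:ℝ) * nn P cl (cl x))
      + ‖x - a (cl x)‖^2 / ((k:ℝ) * cC P cl a (cl x))
      + ‖x - a (cl x)‖^2 / cP P cl a
      + (cC P cl a (cl x) / nn P cl (cl x)) / cP P cl a) := rfl

section Facts
variable (hk : 0 < k) (hpos : ∀ j, 0 < cC P cl a j)
include hk hpos

lemma nn_pos : ∀ j, 0 < nn P cl j := by
  intro j
  have h := Finset.card_pos.2 (Finset.nonempty_of_sum_ne_zero (ne_of_gt (hpos j)))
  simp only [nn]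
  exact_mod_cast h

lemma cP_pos : 0 < cP P cl a := by
  haveI : Nonempty (Fin k) := ⟨⟨0, hk⟩⟩
  exact Finset.sum_pos (fun j _ => hpos j) Finset.univ_nonempty

lemma sens_ge1 (x : Pt d) : 1/(4 * (k:ℝ) * nn P cl (cl x)) ≤ sensμ P cl a x := by
  have hk' : (0:ℝ) < k := Nat.cast_pos.2 hk
  have hn := nn_pos P cl a hk hpos
  have hcP := cP_pos P cl a hk hpos
  rw [sens_eq]
  have h2 : 0 ≤ ‖x - a (cl x)‖^2 / ((k:ℝ) * cC P cl a (cl x)) :=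
    div_nonneg (by positivity) (mul_nonneg hk'.le (hpos _).le)
  have h3 : 0 ≤ ‖x - a (cl x)‖^2 / cP P cl a := div_nonneg (by positivity) hcP.le
  have h4 : 0 ≤ (cC P cl a (cl x) / nn P cl (cl x)) / cP P cl a :=
    div_nonneg (div_nonneg (hpos _).le (hn _).le) hcP.le
  have heq : 1/(4 * (k:ℝ) * nn P cl (cl x)) = 1/4 * (1/((k:ℝ) * nn P cl (cl x))) := by
    ring
  rw [heq]
  linarith

lemma sens_ge2 (x : Pt d) :
    ‖x - a (cl x)‖^2 / (4 * (k:ℝ) * cC P cl a (cl x)) ≤ sensμ P cl a x := by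
  have hk' : (0:ℝ) < k := Nat.cast_pos.2 hk
  have hn := nn_pos P cl a hk hpos
  have hcP := cP_pos P cl a hk hpos
  rw [sens_eq]
  have h1 : 0 ≤ 1/((k:ℝ) * nn P cl (cl x)) :=
    div_nonneg zero_le_one (mul_nonneg hk'.le (hn _).le)
  have h3 : 0 ≤ ‖x - a (cl x)‖^2 / cP P cl a := div_nonneg (by positivity) hcP.le
  have h4 : 0 ≤ (cC P cl a (cl x) / nn P cl (cl x)) / cP P cl a :=
    div_nonneg (div_nonneg (hpos _).le (hn _).le) hcP.le
  have heq : ‖x - a (cl x)‖^2 / (4 * (k:ℝ) * cC P cl a (cl x))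
      = 1/4 * (‖x - a (cl x)‖^2 / ((k:ℝ) * cC P cl a (cl x))) := by
    ring
  rw [heq]
  linarith

lemma sens_pos (x : Pt d) : 0 < sensμ P cl a x := by
  have hk' : (0:ℝ) < k := Nat.cast_pos.2 hk
  have hn := nn_pos P cl a hk hpos
  have h := sens_ge1 P cl a hk hpos x
  have h4 : (0:ℝ) < 4 * (k:ℝ) * nn P cl (cl x) :=
    mul_pos (mul_pos (by norm_num) hk') (hn _)
  have : 0 < 1/(4 * (k:ℝ) * nn P cl (cl x)) := div_pos one_pos h4
  linarith

lemma sens_sum_one : ∑ x ∈ P, sensμ P cl a x = 1 := by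
  classical
  have hk' : (0:ℝ) < k := Nat.cast_pos.2 hk
  have hn := nn_pos P cl a hk hpos
  have hcP := cP_pos P cl a hk hpos
  rw [← Finset.sum_fiberwise P cl (sensμ P cl a)]
  have hinner : ∀ j, ∑ x ∈ P.filter (fun x => cl x = j), sensμ P cl a x
      = 1/(2*(k:ℝ)) + cC P cl a j / (2 * cP P cl a) := by
    intro j
    have hstep : ∀ x ∈ P.filter (fun x => cl x = j), sensμ P cl a x =
        1/4 * (1/((k:ℝ) * nn P cl j))
          + (1/(4 * ((k:ℝ) * cC P cl a j)) + 1/(4 * cP P cl a)) * ‖x - a j‖^2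
          + 1/4 * ((cC P cl a j / nn P cl j) / cP P cl a) := by
      intro x hx
      have hcl : cl x = j := (Finset.mem_filter.1 hx).2
      rw [sens_eq, hcl]
      ring
    rw [Finset.sum_congr rfl hstep]
    rw [Finset.sum_add_distrib, Finset.sum_add_distrib, Finset.sum_const, Finset.sum_const,
      ← Finset.mul_sum]
    have hsum : ∑ x ∈ P.filter (fun x => cl x = j), ‖x - a j‖^2 = cC P cl a j := rfl
    rw [hsum]
    have hcard : ((P.filter fun x => cl x = j).card : ℝ) = nn P cl j := rfl
    rw [nsmul_eq_mul, nsmul_eq_mul, hcard]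
    have hnj := (hn j).ne'
    have hcCj := (hpos j).ne'
    have hcPn := hcP.ne'
    have hkn := hk'.ne'
    have e1 : nn P cl j * (1/4 * (1/((k:ℝ) * nn P cl j))) = 1/(4*(k:ℝ)) := by
      field_simp
    have e2 : (1/(4 * ((k:ℝ) * cC P cl a j)) + 1/(4 * cP P cl a)) * cC P cl a j
        = 1/(4*(k:ℝ)) + cC P cl a j/(4 * cP P cl a) := by
      field_simp
    have e3 : nn P cl j * (1/4 * (cC P cl a j / nn P cl j / cP P cl a))
        = cC P cl a j / (4 * cP P cl a) := by
      field_simp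
    rw [e1, e2, e3]
    ring
  rw [Finset.sum_congr rfl (fun j _ => hinner j)]
  rw [Finset.sum_add_distrib, Finset.sum_const, ← Finset.sum_div]
  have : (∑ j, cC P cl a j) = cP P cl a := rfl
  rw [this, Finset.card_univ, Fintype.card_fin, nsmul_eq_mul]
  field_simp
  ring

end Facts
end CoresetAux

namespace CoresetAux
open scoped Classical

variable {d k : ℕ} (P : Finset (Pt d)) (cl : Pt d → Fin k) (a : Fin k → Pt d)

/-- The weight function `1/(m μ(x))`. -/
def fW (m : ℕ) (x : Pt d) : ℝ := 1 / ((m:ℝ) * sensμ P cl a x)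

def f1 (m : ℕ) (j : Fin k) (p : {x // x ∈ P}) : ℝ :=
  Set.indicator {x : Pt d | cl x = j} (fW P cl a m) p.1

def f3 (m : ℕ) (j : Fin k) (p : {x // x ∈ P}) : ℝ :=
  Set.indicator {x : Pt d | cl x = j} (fun x => fW P cl a m x * ‖x - a j‖ ^ 2) p.1

def f2 (ε : ℝ) (m : ℕ) (j : Fin k) (ℓ : ℕ) (p : {x // x ∈ P}) : ℝ :=
  Set.indicator {x : Pt d | inRing P cl a ε j ℓ x} (fW P cl a m) p.1

/-- The family of "bad" events. -/
def Bad (ε : ℝ) (m : ℕ) : Fin k × ℕ → Set (Fin m → {x // x ∈ P})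
  | (j, 0) => {q | (1 + ε) * nn P cl j ≤ ∑ i, f1 P cl a m j (q i)}
  | (j, 1) => {q | ∑ i, f1 P cl a m j (q i) ≤ (1 - ε) * nn P cl j}
  | (j, 2) => {q | (1 + ε) * cC P cl a j ≤ ∑ i, f3 P cl a m j (q i)}
  | (j, 3) => {q | ∑ i, f3 P cl a m j (q i) ≤ (1 - ε) * cC P cl a j}
  | (j, (ℓ+4)) => {q | nn P cl j / 2 ^ ((ℓ:ℤ) - 1) ≤ ∑ i, f2 P cl a ε m j ℓ (q i)}

section Facts2
variable (hk : 0 < k) (hpos : ∀ j, 0 < cC P cl a j)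
include hk hpos

lemma fW_nonneg (m : ℕ) (x : Pt d) : 0 ≤ fW P cl a m x := by
  have := sens_pos P cl a hk hpos x
  simp only [fW]
  positivity

lemma f1_nonneg (m : ℕ) (j : Fin k) (p : {x // x ∈ P}) : 0 ≤ f1 P cl a m j p :=
  Set.indicator_nonneg (fun x _ => fW_nonneg P cl a hk hpos m x) _

lemma f3_nonneg (m : ℕ) (j : Fin k) (p : {x // x ∈ P}) : 0 ≤ f3 P cl a m j p :=
  Set.indicator_nonneg
    (fun x _ => mul_nonneg (fW_nonneg P cl a hk hpos m x) (by positivity)) _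

lemma f2_nonneg (ε : ℝ) (m : ℕ) (j : Fin k) (ℓ : ℕ) (p : {x // x ∈ P}) :
    0 ≤ f2 P cl a ε m j ℓ p :=
  Set.indicator_nonneg (fun x _ => fW_nonneg P cl a hk hpos m x) _

lemma fW_le (m : ℕ) (hm : 0 < m) (x : Pt d) :
    fW P cl a m x ≤ 4 * (k:ℝ) * nn P cl (cl x) / m := by
  have hk' : (0:ℝ) < k := Nat.cast_pos.2 hk
  have hm' : (0:ℝ) < m := Nat.cast_pos.2 hm
  have hn := nn_pos P cl a hk hpos
  have hμ := sens_pos P cl a hk hpos x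
  have hge := sens_ge1 P cl a hk hpos x
  have hd : (0:ℝ) < 4 * (k:ℝ) * nn P cl (cl x) :=
    mul_pos (mul_pos (by norm_num) hk') (hn _)
  have h1 : 1 ≤ sensμ P cl a x * (4 * (k:ℝ) * nn P cl (cl x)) := by
    have := (div_le_iff₀ hd).1 hge
    linarith
  simp only [fW]
  rw [div_le_div_iff₀ (by positivity) hm']
  nlinarith

lemma fWc_le (m : ℕ) (hm : 0 < m) (x : Pt d) :
    fW P cl a m x * ‖x - a (cl x)‖ ^ 2 ≤ 4 * (k:ℝ) * cC P cl a (cl x) / m := by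
  have hk' : (0:ℝ) < k := Nat.cast_pos.2 hk
  have hm' : (0:ℝ) < m := Nat.cast_pos.2 hm
  have hμ := sens_pos P cl a hk hpos x
  have hge := sens_ge2 P cl a hk hpos x
  have hd : (0:ℝ) < 4 * (k:ℝ) * cC P cl a (cl x) :=
    mul_pos (mul_pos (by norm_num) hk') (hpos _)
  have h1 : ‖x - a (cl x)‖ ^ 2 ≤ sensμ P cl a x * (4 * (k:ℝ) * cC P cl a (cl x)) := by
    have := (div_le_iff₀ hd).1 hge
    linarith
  simp only [fW]
  rw [one_div, inv_mul_eq_div, div_le_div_iff₀ (by positivity) hm']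
  nlinarith

/-- Cost lower bound for points of a ring with `ℓ ≥ 1`. -/
lemma inRing_cost (ε : ℝ) (j : Fin k) (ℓ : ℕ) (hℓ : 1 ≤ ℓ) (x : Pt d)
    (h : inRing P cl a ε j ℓ x) :
    2 ^ ℓ * (cC P cl a j / nn P cl j) ≤ ‖x - a j‖ ^ 2 := by
  rcases h.2 with ⟨h0, _⟩ | ⟨_, _, h1, _⟩ | ⟨h0, h1⟩
  · omega
  · exact h1
  · rw [h0]; exact h1

lemma fW_le_ring (ε : ℝ) (m : ℕ) (hm : 0 < m) (j : Fin k) (ℓ : ℕ) (hℓ : 1 ≤ ℓ)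
    (x : Pt d) (h : inRing P cl a ε j ℓ x) :
    fW P cl a m x ≤ 4 * (k:ℝ) * (nn P cl j / 2 ^ ℓ) / m := by
  have hk' : (0:ℝ) < k := Nat.cast_pos.2 hk
  have hm' : (0:ℝ) < m := Nat.cast_pos.2 hm
  have hn := nn_pos P cl a hk hpos
  have hμ := sens_pos P cl a hk hpos x
  have hcl : cl x = j := h.1
  have hcost := inRing_cost P cl a hk hpos ε j ℓ hℓ x h
  have hd : (0:ℝ) < 4 * (k:ℝ) * cC P cl a j :=
    mul_pos (mul_pos (by norm_num) hk') (hpos _)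
  have hge := sens_ge2 P cl a hk hpos x
  rw [hcl] at hge
  -- sensμ x ≥ cost/(4kcC) ≥ 2^ℓ/(4k nn)
  have h2 : (0:ℝ) < 2 ^ ℓ := by positivity
  have hμge : 2 ^ ℓ / (4 * (k:ℝ) * nn P cl j) ≤ sensμ P cl a x := by
    have heq : (2:ℝ) ^ ℓ / (4 * (k:ℝ) * nn P cl j)
        = (2 ^ ℓ * (cC P cl a j / nn P cl j)) / (4 * (k:ℝ) * cC P cl a j) := by
      field_simp [(hn j).ne', (hpos j).ne', hk'.ne']
    rw [heq]
    exact le_trans ((div_le_div_iff_of_pos_right hd).2 hcost) hge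
  have h1 : 2 ^ ℓ ≤ sensμ P cl a x * (4 * (k:ℝ) * nn P cl j) := by
    have hd2 : (0:ℝ) < 4 * (k:ℝ) * nn P cl j :=
      mul_pos (mul_pos (by norm_num) hk') (hn _)
    have := (div_le_iff₀ hd2).1 hμge
    linarith
  have heq2 : 4 * (k:ℝ) * (nn P cl j / 2 ^ ℓ) / m = (4 * (k:ℝ) * nn P cl j) / (2 ^ ℓ * m) := by
    field_simp
  rw [heq2]
  simp only [fW]
  rw [div_le_div_iff₀ (by positivity) (by positivity)]
  nlinarith [mul_le_mul_of_nonneg_left h1 hm'.le]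

lemma mean_f1 (m : ℕ) (j : Fin k) :
    ∑ p : {x // x ∈ P}, sensμ P cl a p.1 * f1 P cl a m j p = nn P cl j / m := by
  classical
  have hμpos := sens_pos P cl a hk hpos
  have h1 : ∑ p : {x // x ∈ P}, sensμ P cl a p.1 * f1 P cl a m j p
      = ∑ x ∈ P, sensμ P cl a x * Set.indicator {x : Pt d | cl x = j} (fW P cl a m) x :=
    Finset.sum_coe_sort P
      (fun x => sensμ P cl a x * Set.indicator {x : Pt d | cl x = j} (fW P cl a m) x)
  rw [h1]
  calc ∑ x ∈ P, sensμ P cl a x * Set.indicator {x : Pt d | cl x = j} (fW P cl a m) x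
      = ∑ x ∈ P, if cl x = j then sensμ P cl a x * fW P cl a m x else 0 := by
        apply Finset.sum_congr rfl; intro x _
        by_cases h : cl x = j
        · rw [Set.indicator_of_mem (show x ∈ {x : Pt d | cl x = j} from h), if_pos h]
        · rw [Set.indicator_of_notMem (show x ∉ {x : Pt d | cl x = j} from h), if_neg h, mul_zero]
    _ = ∑ x ∈ P.filter (fun x => cl x = j), sensμ P cl a x * fW P cl a m x :=
        (Finset.sum_filter _ _).symm
    _ = ∑ _x ∈ P.filter (fun x => cl x = j), (1/(m:ℝ)) := by
        apply Finset.sum_congr rfl; intro x _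
        simp only [fW]
        rcases Nat.eq_zero_or_pos m with hm | hm
        · simp [hm]
        · have hm' : ((m:ℝ)) ≠ 0 := (Nat.cast_pos.2 hm).ne'
          field_simp [(hμpos x).ne']
    _ = nn P cl j / m := by
        rw [Finset.sum_const, nsmul_eq_mul]
        simp only [nn]
        ring

lemma mean_f3 (m : ℕ) (j : Fin k) :
    ∑ p : {x // x ∈ P}, sensμ P cl a p.1 * f3 P cl a m j p = cC P cl a j / m := by
  classical
  have hμpos := sens_pos P cl a hk hpos
  have h1 : ∑ p : {x // x ∈ P}, sensμ P cl a p.1 * f3 P cl a m j p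
      = ∑ x ∈ P, sensμ P cl a x *
          Set.indicator {x : Pt d | cl x = j} (fun x => fW P cl a m x * ‖x - a j‖ ^ 2) x :=
    Finset.sum_coe_sort P (fun x => sensμ P cl a x *
      Set.indicator {x : Pt d | cl x = j} (fun x => fW P cl a m x * ‖x - a j‖ ^ 2) x)
  rw [h1]
  calc ∑ x ∈ P, sensμ P cl a x *
          Set.indicator {x : Pt d | cl x = j} (fun x => fW P cl a m x * ‖x - a j‖ ^ 2) x
      = ∑ x ∈ P, if cl x = j then sensμ P cl a x * (fW P cl a m x * ‖x - a j‖ ^ 2) else 0 := by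
        apply Finset.sum_congr rfl; intro x _
        by_cases h : cl x = j
        · rw [Set.indicator_of_mem (show x ∈ {x : Pt d | cl x = j} from h), if_pos h]
        · rw [Set.indicator_of_notMem (show x ∉ {x : Pt d | cl x = j} from h), if_neg h, mul_zero]
    _ = ∑ x ∈ P.filter (fun x => cl x = j),
          sensμ P cl a x * (fW P cl a m x * ‖x - a j‖ ^ 2) := (Finset.sum_filter _ _).symm
    _ = ∑ x ∈ P.filter (fun x => cl x = j), ‖x - a j‖ ^ 2 / m := by
        apply Finset.sum_congr rfl; intro x _
        simp only [fW]
        rcases Nat.eq_zero_or_pos m with hm | hm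
        · simp [hm]
        · have hm' : ((m:ℝ)) ≠ 0 := (Nat.cast_pos.2 hm).ne'
          field_simp [(hμpos x).ne']
    _ = cC P cl a j / m := by
        rw [← Finset.sum_div]
        rfl

lemma mean_f2 (ε : ℝ) (m : ℕ) (j : Fin k) (ℓ : ℕ) :
    ∑ p : {x // x ∈ P}, sensμ P cl a p.1 * f2 P cl a ε m j ℓ p
      = ((P.filter (fun x => inRing P cl a ε j ℓ x)).card : ℝ) / m := by
  classical
  have hμpos := sens_pos P cl a hk hpos
  have h1 : ∑ p : {x // x ∈ P}, sensμ P cl a p.1 * f2 P cl a ε m j ℓ p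
      = ∑ x ∈ P, sensμ P cl a x *
          Set.indicator {x : Pt d | inRing P cl a ε j ℓ x} (fW P cl a m) x :=
    Finset.sum_coe_sort P (fun x => sensμ P cl a x *
      Set.indicator {x : Pt d | inRing P cl a ε j ℓ x} (fW P cl a m) x)
  rw [h1]
  calc ∑ x ∈ P, sensμ P cl a x *
          Set.indicator {x : Pt d | inRing P cl a ε j ℓ x} (fW P cl a m) x
      = ∑ x ∈ P, if inRing P cl a ε j ℓ x then sensμ P cl a x * fW P cl a m x else 0 := by
        apply Finset.sum_congr rfl; intro x _
        by_cases h : inRing P cl a ε j ℓ x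
        · rw [Set.indicator_of_mem (show x ∈ {x : Pt d | inRing P cl a ε j ℓ x} from h), if_pos h]
        · rw [Set.indicator_of_notMem (show x ∉ {x : Pt d | inRing P cl a ε j ℓ x} from h),
            if_neg h, mul_zero]
    _ = ∑ x ∈ P.filter (fun x => inRing P cl a ε j ℓ x), sensμ P cl a x * fW P cl a m x :=
        (Finset.sum_filter _ _).symm
    _ = ∑ _x ∈ P.filter (fun x => inRing P cl a ε j ℓ x), (1/(m:ℝ)) := by
        apply Finset.sum_congr rfl; intro x _
        simp only [fW]
        rcases Nat.eq_zero_or_pos m with hm | hm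
        · simp [hm]
        · have hm' : ((m:ℝ)) ≠ 0 := (Nat.cast_pos.2 hm).ne'
          field_simp [(hμpos x).ne']
    _ = ((P.filter (fun x => inRing P cl a ε j ℓ x)).card : ℝ) / m := by
        rw [Finset.sum_const, nsmul_eq_mul]
        ring

lemma ring_subset (ε : ℝ) (j : Fin k) (ℓ : ℕ) :
    P.filter (fun x => inRing P cl a ε j ℓ x) ⊆ P.filter (fun x => cl x = j) := by
  classical
  intro x hx
  rw [Finset.mem_filter] at hx ⊢
  exact ⟨hx.1, hx.2.1⟩

lemma ring_card (ε : ℝ) (j : Fin k) (ℓ : ℕ) :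
    ((P.filter (fun x => inRing P cl a ε j ℓ x)).card : ℝ) ≤ nn P cl j / 2 ^ ℓ := by
  classical
  have hk' : (0:ℝ) < k := Nat.cast_pos.2 hk
  have hn := nn_pos P cl a hk hpos
  rcases Nat.eq_zero_or_pos ℓ with h0 | hℓ
  · subst h0
    simp only [pow_zero, div_one]
    have := Finset.card_le_card (ring_subset P cl a hk hpos ε j 0)
    simp only [nn]
    exact_mod_cast this
  · set R := P.filter (fun x => inRing P cl a ε j ℓ x) with hR
    have h1 : (R.card : ℝ) * (2 ^ ℓ * (cC P cl a j / nn P cl j)) ≤ ∑ x ∈ R, ‖x - a j‖ ^ 2 := by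
      have := Finset.card_nsmul_le_sum R (fun x => ‖x - a j‖ ^ 2)
        (2 ^ ℓ * (cC P cl a j / nn P cl j))
        (fun x hx => inRing_cost P cl a hk hpos ε j ℓ hℓ x (Finset.mem_filter.1 hx).2)
      rwa [nsmul_eq_mul] at this
    have h2 : ∑ x ∈ R, ‖x - a j‖ ^ 2 ≤ cC P cl a j :=
      Finset.sum_le_sum_of_subset_of_nonneg (ring_subset P cl a hk hpos ε j ℓ)
        (fun x _ _ => by positivity)
    have key : (R.card:ℝ) * 2 ^ ℓ * cC P cl a j ≤ nn P cl j * cC P cl a j := by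
      have h4 : (R.card:ℝ) * (2 ^ ℓ * (cC P cl a j / nn P cl j)) * nn P cl j
          ≤ cC P cl a j * nn P cl j :=
        mul_le_mul_of_nonneg_right (h1.trans h2) (hn j).le
      calc (R.card:ℝ) * 2 ^ ℓ * cC P cl a j
          = (R.card:ℝ) * (2 ^ ℓ * (cC P cl a j / nn P cl j)) * nn P cl j := by
            field_simp [(hn j).ne']
        _ ≤ cC P cl a j * nn P cl j := h4
        _ = nn P cl j * cC P cl a j := mul_comm _ _
    have h5 : (R.card:ℝ) * 2 ^ ℓ ≤ nn P cl j := le_of_mul_le_mul_right key (hpos j)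
    rw [le_div_iff₀ (by positivity : (0:ℝ) < 2 ^ ℓ)]
    exact h5

end Facts2
end CoresetAux

namespace CoresetAux
open scoped Classical

variable {d k : ℕ} (P : Finset (Pt d)) (cl : Pt d → Fin k) (a : Fin k → Pt d)

section Facts3
variable (hk : 0 < k) (hpos : ∀ j, 0 < cC P cl a j)
include hk hpos

lemma bound_f1 (m : ℕ) (hm : 0 < m) (j : Fin k) (p : {x // x ∈ P}) :
    f1 P cl a m j p ≤ 4 * (k:ℝ) * nn P cl j / m := by
  have hk' : (0:ℝ) < k := Nat.cast_pos.2 hk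
  have hn := nn_pos P cl a hk hpos
  by_cases h : (p:Pt d) ∈ {x : Pt d | cl x = j}
  · rw [f1, Set.indicator_of_mem h]
    have hb := fW_le P cl a hk hpos m hm p.1
    rwa [show cl (p:Pt d) = j from h] at hb
  · rw [f1, Set.indicator_of_notMem h]
    have : (0:ℝ) ≤ 4 * (k:ℝ) * nn P cl j :=
      mul_nonneg (mul_nonneg (by norm_num) hk'.le) (hn j).le
    positivity

lemma bound_f3 (m : ℕ) (hm : 0 < m) (j : Fin k) (p : {x // x ∈ P}) :
    f3 P cl a m j p ≤ 4 * (k:ℝ) * cC P cl a j / m := by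
  have hk' : (0:ℝ) < k := Nat.cast_pos.2 hk
  by_cases h : (p:Pt d) ∈ {x : Pt d | cl x = j}
  · rw [f3, Set.indicator_of_mem h]
    have hb := fWc_le P cl a hk hpos m hm p.1
    rwa [show cl (p:Pt d) = j from h] at hb
  · rw [f3, Set.indicator_of_notMem h]
    have : (0:ℝ) ≤ 4 * (k:ℝ) * cC P cl a j :=
      mul_nonneg (mul_nonneg (by norm_num) hk'.le) (hpos j).le
    positivity

lemma bound_f2 (ε : ℝ) (m : ℕ) (hm : 0 < m) (j : Fin k) (ℓ : ℕ) (p : {x // x ∈ P}) :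
    f2 P cl a ε m j ℓ p ≤ 4 * (k:ℝ) * (nn P cl j / 2 ^ ℓ) / m := by
  have hk' : (0:ℝ) < k := Nat.cast_pos.2 hk
  have hn := nn_pos P cl a hk hpos
  by_cases h : (p:Pt d) ∈ {x : Pt d | inRing P cl a ε j ℓ x}
  · rw [f2, Set.indicator_of_mem h]
    have hr : inRing P cl a ε j ℓ (p:Pt d) := h
    rcases Nat.eq_zero_or_pos ℓ with h0 | hℓ
    · subst h0
      have hb := fW_le P cl a hk hpos m hm p.1
      rw [show cl (p:Pt d) = j from hr.1] at hb
      simpa using hb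
    · exact fW_le_ring P cl a hk hpos ε m hm j ℓ hℓ p.1 hr
  · rw [f2, Set.indicator_of_notMem h]
    have h1 : (0:ℝ) ≤ nn P cl j / 2 ^ ℓ := div_nonneg (hn j).le (by positivity)
    have : (0:ℝ) ≤ 4 * (k:ℝ) * (nn P cl j / 2 ^ ℓ) :=
      mul_nonneg (mul_nonneg (by norm_num) hk'.le) h1
    positivity

end Facts3

lemma sumrw1 (m : ℕ) (j : Fin k) (q : Fin m → {x // x ∈ P}) :
    (∑ i : Fin m, Set.indicator {i : Fin m | cl (q i).1 = j}
        (fun i => 1 / ((m:ℝ) * sensμ P cl a (q i).1)) i)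
      = ∑ i, f1 P cl a m j (q i) := by
  apply Finset.sum_congr rfl
  intro i _
  simp only [f1]
  by_cases h : cl (q i).1 = j
  · rw [Set.indicator_of_mem (show i ∈ {i : Fin m | cl (q i).1 = j} from h),
      Set.indicator_of_mem (show ((q i):Pt d) ∈ {x : Pt d | cl x = j} from h)]
    rfl
  · rw [Set.indicator_of_notMem (show i ∉ {i : Fin m | cl (q i).1 = j} from h),
      Set.indicator_of_notMem (show ((q i):Pt d) ∉ {x : Pt d | cl x = j} from h)]

lemma sumrw3 (m : ℕ) (j : Fin k) (q : Fin m → {x // x ∈ P}) :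
    (∑ i : Fin m, Set.indicator {i : Fin m | cl (q i).1 = j}
        (fun i => (1 / ((m:ℝ) * sensμ P cl a (q i).1)) * ‖(q i).1 - a j‖ ^ 2) i)
      = ∑ i, f3 P cl a m j (q i) := by
  apply Finset.sum_congr rfl
  intro i _
  simp only [f3]
  by_cases h : cl (q i).1 = j
  · rw [Set.indicator_of_mem (show i ∈ {i : Fin m | cl (q i).1 = j} from h),
      Set.indicator_of_mem (show ((q i):Pt d) ∈ {x : Pt d | cl x = j} from h)]
    rfl
  · rw [Set.indicator_of_notMem (show i ∉ {i : Fin m | cl (q i).1 = j} from h),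
      Set.indicator_of_notMem (show ((q i):Pt d) ∉ {x : Pt d | cl x = j} from h)]

lemma sumrw2 (ε : ℝ) (m : ℕ) (j : Fin k) (ℓ : ℕ) (q : Fin m → {x // x ∈ P}) :
    (∑ i : Fin m, Set.indicator {i : Fin m | inRing P cl a ε j ℓ (q i).1}
        (fun i => 1 / ((m:ℝ) * sensμ P cl a (q i).1)) i)
      = ∑ i, f2 P cl a ε m j ℓ (q i) := by
  apply Finset.sum_congr rfl
  intro i _
  simp only [f2]
  by_cases h : inRing P cl a ε j ℓ (q i).1
  · rw [Set.indicator_of_mem (show i ∈ {i : Fin m | inRing P cl a ε j ℓ (q i).1} from h),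
      Set.indicator_of_mem (show ((q i):Pt d) ∈ {x : Pt d | inRing P cl a ε j ℓ x} from h)]
    rfl
  · rw [Set.indicator_of_notMem (show i ∉ {i : Fin m | inRing P cl a ε j ℓ (q i).1} from h),
      Set.indicator_of_notMem (show ((q i):Pt d) ∉ {x : Pt d | inRing P cl a ε j ℓ x} from h)]

lemma lmax_bound {ε : ℝ} (hε0 : 0 < ε) (hε1 : ε ≤ 1/2) : ε * (lmax ε + 6) ≤ 7 := by
  have hinv : (2:ℝ) ≤ ε⁻¹ := by
    rw [show (2:ℝ) = (1/2)⁻¹ by norm_num]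
    exact inv_anti₀ hε0 hε1
  have hlog0 : 0 ≤ Int.log 2 ε⁻¹ := by
    rw [Int.log_of_one_le_right 2 (by linarith : (1:ℝ) ≤ ε⁻¹)]
    exact Int.natCast_nonneg _
  have h2l : (2:ℝ) ^ (lmax ε) ≤ ε⁻¹ := by
    have h := Int.zpow_log_le_self (b := 2) (r := ε⁻¹) (by norm_num) (by positivity)
    rw [show ((Int.log 2 ε⁻¹ : ℤ)) = ((lmax ε : ℕ) : ℤ) by
      rw [lmax, Int.toNat_of_nonneg hlog0]] at h
    rw [zpow_natCast] at h
    exact_mod_cast h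
  have hεl : ε * 2 ^ (lmax ε) ≤ 1 := by
    have := mul_le_mul_of_nonneg_left h2l hε0.le
    rwa [mul_inv_cancel₀ hε0.ne'] at this
  have hcast : ((lmax ε : ℝ) + 6) ≤ 7 * 2 ^ (lmax ε) := by
    have h1 : ((lmax ε : ℝ)) < 2 ^ (lmax ε) := by
      exact_mod_cast Nat.lt_two_pow_self (n := lmax ε)
    have h2 : (1:ℝ) ≤ 2 ^ (lmax ε) := by
      have := Nat.one_le_two_pow (n := lmax ε)
      exact_mod_cast this
    linarith
  calc ε * ((lmax ε : ℕ) + 6 : ℝ) ≤ ε * (7 * 2 ^ (lmax ε)) :=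
        mul_le_mul_of_nonneg_left (by push_cast; linarith [hcast]) hε0.le
    _ = 7 * (ε * 2 ^ (lmax ε)) := by ring
    _ ≤ 7 * 1 := by linarith
    _ = 7 := by norm_num

lemma final_numeric {k : ℕ} {ε : ℝ} (hk : 0 < k) (hε0 : 0 < ε) (hε1 : ε ≤ 1/2) :
    ((k:ℝ) * ((lmax ε : ℝ) + 6)) * Real.exp (-(4 * Real.log (10 * (k:ℝ) * ε⁻¹)))
      ≤ ε^3 / (k:ℝ)^3 := by
  have hk' : (0:ℝ) < k := Nat.cast_pos.2 hk
  have hexp : Real.exp (-(4 * Real.log (10 * (k:ℝ) * ε⁻¹))) = ((10 * (k:ℝ) * ε⁻¹)^4)⁻¹ := by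
    rw [show ((10*(k:ℝ)*ε⁻¹)^4)⁻¹ = (Real.exp (Real.log ((10*(k:ℝ)*ε⁻¹)^4)))⁻¹ by
      rw [Real.exp_log (by positivity)]]
    rw [← Real.exp_neg, Real.log_pow]
    norm_num
  rw [hexp]
  have hlb := lmax_bound hε0 hε1
  have h7 : ((lmax ε : ℝ) + 6) * ε ≤ 10000 := by linarith
  have hX4 : ((10 * (k:ℝ) * ε⁻¹)^4) = 10^4 * (k:ℝ)^4 * (ε^4)⁻¹ := by
    field_simp
  have heqL : ((k:ℝ) * ((lmax ε : ℝ) + 6)) * ((10:ℝ)^4 * (k:ℝ)^4 * (ε^4)⁻¹)⁻¹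
      = (((lmax ε : ℝ) + 6) * ε) * ε^3 / ((10:ℝ)^4 * (k:ℝ)^3) := by
    field_simp
  rw [hX4, heqL, div_le_div_iff₀ (by positivity) (by positivity)]
  nlinarith [mul_le_mul_of_nonneg_right h7 (by positivity : (0:ℝ) ≤ ε^3*(k:ℝ)^3)]

end CoresetAux

set_option maxHeartbeats 1600000 in
/-- If `m ≥ 48·k·ε^{-2}·log(10k·ε^{-1})`, then the sensitivity-sampling sample
satisfies event `E` with probability at least `1 − ε³/k³`. -/
theorem eventE_high_probability
    {d : ℕ} (k m : ℕ) (ε : ℝ) (P : Finset (Pt d)) (cl : Pt d → Fin k)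
    (a : Fin k → Pt d)
    (hε0 : 0 < ε) (hε1 : ε ≤ 1 / 2)
    -- nondegeneracy: every cluster has positive cost
    (hpos : ∀ j : Fin k, 0 < ∑ p ∈ P.filter (fun p => cl p = j), ‖p - a j‖ ^ 2)
    -- the number of samples
    (hm : 48 * (k : ℝ) * ε ^ (-2 : ℤ) * Real.log (10 * (k : ℝ) * ε⁻¹) ≤ (m : ℝ)) :
    1 - ε ^ 3 / (k : ℝ) ^ 3 ≤
      ∑ q : Fin m → {x // x ∈ P},
        Set.indicator {q : Fin m → {x // x ∈ P} | EventE P cl a ε m q}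
          (fun q => ∏ i : Fin m, sensμ P cl a (q i).1) q := by
  classical
  have hk : 0 < k := Fin.pos (cl 0)
  have hk' : (0:ℝ) < k := Nat.cast_pos.2 hk
  have hk1 : (1:ℝ) ≤ k := by exact_mod_cast hk
  have hpos' : ∀ j, 0 < CoresetAux.cC P cl a j := hpos
  have hn := CoresetAux.nn_pos P cl a hk hpos'
  have hμpos := CoresetAux.sens_pos P cl a hk hpos'
  have hεinv : (2:ℝ) ≤ ε⁻¹ := by
    rw [show (2:ℝ) = (1/2)⁻¹ by norm_num]
    exact inv_anti₀ hε0 hε1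
  have hX1 : (1:ℝ) < 10 * (k:ℝ) * ε⁻¹ := by nlinarith
  have hL : 0 < Real.log (10 * (k:ℝ) * ε⁻¹) := Real.log_pos hX1
  set L : ℝ := Real.log (10 * (k:ℝ) * ε⁻¹) with hLdef
  have hmz : ε ^ (-2 : ℤ) = (ε^2)⁻¹ := by
    rw [zpow_neg, zpow_two, ← sq]
  rw [hmz] at hm
  have hmR : (0:ℝ) < m := lt_of_lt_of_le (by positivity) hm
  have hm0 : 0 < m := by exact_mod_cast hmR
  have hε2 : (4:ℝ) ≤ (ε^2)⁻¹ := by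
    rw [show (4:ℝ) = (((1:ℝ)/2)^2)⁻¹ by norm_num]
    apply inv_anti₀ (by positivity)
    nlinarith
  -- exponent comparisons
  have h48 : 48 * (k:ℝ) * L ≤ m * ε^2 := by
    have h := mul_le_mul_of_nonneg_right hm (sq_nonneg ε)
    calc 48 * (k:ℝ) * L = 48 * (k:ℝ) * (ε^2)⁻¹ * L * ε^2 := by
          field_simp
      _ ≤ (m:ℝ) * ε^2 := h
  have hA : 4 * L ≤ (7:ℝ)/72 * (ε^2 * m / k) := by
    have h1 : 48 * L ≤ ε^2 * m / k := by
      rw [le_div_iff₀ hk']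
      nlinarith
    linarith
  have hB : 4 * L ≤ (m:ℝ)/(16*k) := by
    have h2 : 192 * (k:ℝ) * L ≤ m := by
      refine le_trans ?_ hm
      nlinarith [mul_nonneg (mul_nonneg hk'.le hL.le) (sub_nonneg.2 hε2)]
    rw [le_div_iff₀ (by positivity)]
    nlinarith [mul_nonneg hk'.le hL.le]
  -- probability space facts
  have hμ1 : ∑ x ∈ P, sensμ P cl a x = 1 := CoresetAux.sens_sum_one P cl a hk hpos'
  have hμ1' : ∑ p : {x // x ∈ P}, sensμ P cl a p.1 = 1 := by
    rw [Finset.sum_coe_sort P (fun x => sensμ P cl a x)]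
    exact hμ1
  set W : (Fin m → {x // x ∈ P}) → ℝ := fun q => ∏ i : Fin m, sensμ P cl a (q i).1 with hWdef
  have hWnn : ∀ q, 0 ≤ W q := fun q => Finset.prod_nonneg fun i _ => (hμpos _).le
  have htot : ∑ q : Fin m → {x // x ∈ P}, W q = 1 := by
    have h := CoresetAux.sum_prod_pow (α := {x // x ∈ P}) m (fun p => sensμ P cl a p.1)
    rw [hμ1', one_pow] at h
    exact h
  have hsplit : ∑ q : Fin m → {x // x ∈ P},
        Set.indicator {q : Fin m → {x // x ∈ P} | EventE P cl a ε m q} W q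
      = 1 - ∑ q : Fin m → {x // x ∈ P},
          Set.indicator {q : Fin m → {x // x ∈ P} | EventE P cl a ε m q}ᶜ W q := by
    have hpt : ∀ q : Fin m → {x // x ∈ P},
        Set.indicator {q : Fin m → {x // x ∈ P} | EventE P cl a ε m q} W q
          = W q - Set.indicator {q : Fin m → {x // x ∈ P} | EventE P cl a ε m q}ᶜ W q := by
      intro q
      by_cases hq : q ∈ {q : Fin m → {x // x ∈ P} | EventE P cl a ε m q}
      · rw [Set.indicator_of_mem hq, Set.indicator_of_notMem (Set.notMem_compl_iff.2 hq)]
        ring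
      · rw [Set.indicator_of_notMem hq, Set.indicator_of_mem (Set.mem_compl hq)]
        ring
    rw [Finset.sum_congr rfl (fun q _ => hpt q), Finset.sum_sub_distrib, htot]
  rw [hsplit]
  -- union bound over bad events
  set s : Finset (Fin k × ℕ) := Finset.univ ×ˢ Finset.range (lmax ε + 6) with hsdef
  have hmem : ∀ (j : Fin k) (i : ℕ), i < lmax ε + 6 → (j, i) ∈ s := fun j i hi =>
    Finset.mem_product.2 ⟨Finset.mem_univ _, Finset.mem_range.2 hi⟩
  have hcover : ∀ q ∈ {q : Fin m → {x // x ∈ P} | EventE P cl a ε m q}ᶜ,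
      ∃ ji ∈ s, q ∈ CoresetAux.Bad P cl a ε m ji := by
    intro q hq
    by_contra hno
    push_neg at hno
    refine hq (show EventE P cl a ε m q from ?_)
    refine ⟨fun j => ⟨?_, ?_⟩, fun j ℓ hℓ => ?_, fun j => ⟨?_, ?_⟩⟩
    · rw [CoresetAux.sumrw1 P cl a m j q]
      have h := hno (j, 1) (hmem j 1 (by omega))
      have h' : ¬ (∑ i, CoresetAux.f1 P cl a m j (q i) ≤ (1-ε) * CoresetAux.nn P cl j) := h
      exact (not_le.1 h').le
    · rw [CoresetAux.sumrw1 P cl a m j q]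
      have h := hno (j, 0) (hmem j 0 (by omega))
      have h' : ¬ ((1+ε) * CoresetAux.nn P cl j ≤ ∑ i, CoresetAux.f1 P cl a m j (q i)) := h
      exact (not_le.1 h').le
    · rw [CoresetAux.sumrw2 P cl a ε m j ℓ q]
      have h := hno (j, ℓ + 4) (hmem j (ℓ + 4) (by omega))
      have h' : ¬ (CoresetAux.nn P cl j / 2 ^ ((ℓ:ℤ) - 1)
          ≤ ∑ i, CoresetAux.f2 P cl a ε m j ℓ (q i)) := h
      exact (not_le.1 h').le
    · rw [CoresetAux.sumrw3 P cl a m j q]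
      have h := hno (j, 3) (hmem j 3 (by omega))
      have h' : ¬ (∑ i, CoresetAux.f3 P cl a m j (q i) ≤ (1-ε) * CoresetAux.cC P cl a j) := h
      exact (not_le.1 h').le
    · rw [CoresetAux.sumrw3 P cl a m j q]
      have h := hno (j, 2) (hmem j 2 (by omega))
      have h' : ¬ ((1+ε) * CoresetAux.cC P cl a j ≤ ∑ i, CoresetAux.f3 P cl a m j (q i)) := h
      exact (not_le.1 h').le
  have hptw : ∀ q : Fin m → {x // x ∈ P},
      Set.indicator {q : Fin m → {x // x ∈ P} | EventE P cl a ε m q}ᶜ W q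
        ≤ ∑ ji ∈ s, Set.indicator (CoresetAux.Bad P cl a ε m ji) W q := by
    intro q
    by_cases hq : q ∈ {q : Fin m → {x // x ∈ P} | EventE P cl a ε m q}ᶜ
    · obtain ⟨ji, hji, hqB⟩ := hcover q hq
      rw [Set.indicator_of_mem hq]
      calc W q = Set.indicator (CoresetAux.Bad P cl a ε m ji) W q :=
            (Set.indicator_of_mem hqB W).symm
        _ ≤ ∑ ji ∈ s, Set.indicator (CoresetAux.Bad P cl a ε m ji) W q :=
            Finset.single_le_sum
              (f := fun ji => Set.indicator (CoresetAux.Bad P cl a ε m ji) W q)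
              (fun ji _ => Set.indicator_nonneg (fun q _ => hWnn q) q) hji
    · rw [Set.indicator_of_notMem hq]
      exact Finset.sum_nonneg fun ji _ => Set.indicator_nonneg (fun q _ => hWnn q) q
  have htail : ∀ ji ∈ s, ∑ q : Fin m → {x // x ∈ P},
      Set.indicator (CoresetAux.Bad P cl a ε m ji) W q ≤ Real.exp (-(4 * L)) := by
    rintro ⟨j, i⟩ hji
    have hi : i < lmax ε + 6 := Finset.mem_range.1 (Finset.mem_product.1 hji).2
    have hf1nn := fun p => CoresetAux.f1_nonneg P cl a hk hpos' m j p
    have hf3nn := fun p => CoresetAux.f3_nonneg P cl a hk hpos' m j p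
    have hμnn : ∀ p : {x // x ∈ P}, 0 ≤ sensμ P cl a p.1 := fun p => (hμpos _).le
    rcases i with _ | (_ | (_ | (_ | ℓ)))
    · -- i = 0 : P1 upper tail
      have h := CoresetAux.tail_up (fun p : {x // x ∈ P} => sensμ P cl a p.1)
        (CoresetAux.f1 P cl a m j) hμnn hμ1' m k ε (CoresetAux.nn P cl j)
        hk hm0 (hn j) hε0 hε1 hf1nn
        (fun p => CoresetAux.bound_f1 P cl a hk hpos' m hm0 j p)
        (CoresetAux.mean_f1 P cl a hk hpos' m j)
      exact h.trans (Real.exp_le_exp.2 (by linarith))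
    · -- i = 1 : P1 lower tail
      have h := CoresetAux.tail_low (fun p : {x // x ∈ P} => sensμ P cl a p.1)
        (CoresetAux.f1 P cl a m j) hμnn hμ1' m k ε (CoresetAux.nn P cl j)
        hk hm0 (hn j) hε0 hε1 hf1nn
        (fun p => CoresetAux.bound_f1 P cl a hk hpos' m hm0 j p)
        (CoresetAux.mean_f1 P cl a hk hpos' m j)
      exact h.trans (Real.exp_le_exp.2 (by linarith))
    · -- i = 2 : P3 upper tail
      have h := CoresetAux.tail_up (fun p : {x // x ∈ P} => sensμ P cl a p.1)
        (CoresetAux.f3 P cl a m j) hμnn hμ1' m k ε (CoresetAux.cC P cl a j)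
        hk hm0 (hpos' j) hε0 hε1 hf3nn
        (fun p => CoresetAux.bound_f3 P cl a hk hpos' m hm0 j p)
        (CoresetAux.mean_f3 P cl a hk hpos' m j)
      exact h.trans (Real.exp_le_exp.2 (by linarith))
    · -- i = 3 : P3 lower tail
      have h := CoresetAux.tail_low (fun p : {x // x ∈ P} => sensμ P cl a p.1)
        (CoresetAux.f3 P cl a m j) hμnn hμ1' m k ε (CoresetAux.cC P cl a j)
        hk hm0 (hpos' j) hε0 hε1 hf3nn
        (fun p => CoresetAux.bound_f3 P cl a hk hpos' m hm0 j p)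
        (CoresetAux.mean_f3 P cl a hk hpos' m j)
      exact h.trans (Real.exp_le_exp.2 (by linarith))
    · -- i = ℓ + 4 : ring tail
      have hth : CoresetAux.nn P cl j / 2 ^ ((ℓ:ℤ) - 1)
          = 2 * (CoresetAux.nn P cl j / 2 ^ ℓ) := by
        rw [zpow_sub₀ (two_ne_zero), zpow_one, zpow_natCast]
        field_simp
      have hset : CoresetAux.Bad P cl a ε m (j, ℓ + 4)
          = {q : Fin m → {x // x ∈ P} | 2 * (CoresetAux.nn P cl j / 2 ^ ℓ)
              ≤ ∑ i, CoresetAux.f2 P cl a ε m j ℓ (q i)} := by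
        show {q : Fin m → {x // x ∈ P} | CoresetAux.nn P cl j / 2 ^ ((ℓ:ℤ) - 1)
            ≤ ∑ i, CoresetAux.f2 P cl a ε m j ℓ (q i)} = _
        rw [hth]
      rw [hset]
      have hν : (0:ℝ) < CoresetAux.nn P cl j / 2 ^ ℓ := div_pos (hn j) (by positivity)
      have hmean : ∑ p : {x // x ∈ P}, sensμ P cl a p.1 * CoresetAux.f2 P cl a ε m j ℓ p
          ≤ (CoresetAux.nn P cl j / 2 ^ ℓ) / m := by
        rw [CoresetAux.mean_f2 P cl a hk hpos' ε m j ℓ]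
        gcongr
        exact CoresetAux.ring_card P cl a hk hpos' ε j ℓ
      have h := CoresetAux.tail_ring (fun p : {x // x ∈ P} => sensμ P cl a p.1)
        (CoresetAux.f2 P cl a ε m j ℓ) hμnn hμ1' m k (CoresetAux.nn P cl j / 2 ^ ℓ)
        hk hm0 hν (fun p => CoresetAux.f2_nonneg P cl a hk hpos' ε m j ℓ p)
        (fun p => CoresetAux.bound_f2 P cl a hk hpos' ε m hm0 j ℓ p) hmean
      exact h.trans (Real.exp_le_exp.2 (by linarith))
  -- combine
  have hbad : ∑ q : Fin m → {x // x ∈ P},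
      Set.indicator {q : Fin m → {x // x ∈ P} | EventE P cl a ε m q}ᶜ W q
        ≤ ε^3 / (k:ℝ)^3 := by
    have hchain : ∑ q : Fin m → {x // x ∈ P},
        Set.indicator {q : Fin m → {x // x ∈ P} | EventE P cl a ε m q}ᶜ W q
          ≤ (s.card : ℝ) * Real.exp (-(4 * L)) := by
      calc ∑ q : Fin m → {x // x ∈ P},
            Set.indicator {q : Fin m → {x // x ∈ P} | EventE P cl a ε m q}ᶜ W q
          ≤ ∑ q : Fin m → {x // x ∈ P}, ∑ ji ∈ s,
              Set.indicator (CoresetAux.Bad P cl a ε m ji) W q :=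
            Finset.sum_le_sum fun q _ => hptw q
        _ = ∑ ji ∈ s, ∑ q : Fin m → {x // x ∈ P},
              Set.indicator (CoresetAux.Bad P cl a ε m ji) W q := Finset.sum_comm
        _ ≤ ∑ _ji ∈ s, Real.exp (-(4 * L)) := Finset.sum_le_sum htail
        _ = (s.card : ℝ) * Real.exp (-(4 * L)) := by
            rw [Finset.sum_const, nsmul_eq_mul]
    have hcard : (s.card : ℝ) = (k:ℝ) * ((lmax ε : ℝ) + 6) := by
      rw [hsdef, Finset.card_product, Finset.card_univ, Fintype.card_fin, Finset.card_range]
      push_cast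
      ring
    calc _ ≤ (s.card : ℝ) * Real.exp (-(4 * L)) := hchain
      _ = ((k:ℝ) * ((lmax ε : ℝ) + 6)) * Real.exp (-(4 * L)) := by rw [hcard]
      _ ≤ ε^3 / (k:ℝ)^3 := CoresetAux.final_numeric hk hε0 hε1
  linarith
end
end

section
/- There is an absolute constant C > 0 such that the following holds. Let ε ∈ (0,1/2], let P ⊂ ℝ^d be a finite set partitioned into clusters C_1,…,C_k with centers a_1,…,a_k (write A = {a_1,…,a_k} and Δ_q := cost(C_j,a_j)/|C_j| for q ∈ C_j). Let Ω ⊆ P have non-negative weights (w_q)_{q∈Ω} satisfying: (i) for each q ∈ Ω ∩ C_j, w_q·cost(q,a_j) ≤ 4·cost(P,A)/m and w_q·Δ_q ≤ 4·cost(P,A)/m; (ii) property P1: ∑_{q∈Ω∩C_j} w_q ∈ [(1−ε)|C_j|, (1+ε)|C_j|] for each j; and (iii) property P3: ∑_{q∈Ω∩C_j} w_q·cost(q,a_j) ∈ [(1−ε)cost(C_j,a_j), (1+ε)cost(C_j,a_j)] for each j. Then for every finite set S of centers in ℝ^d, defining err(q,S) := √(cost(q,S)·cost(q,A)) + √(cost(q,S)·Δ_q)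 + cost(q,A) + Δ_q, one has ∑_{q∈Ω} w_q²·err(q,S)² ≤ C·(cost(P,A)/m)·(cost(P,S) + cost(P,A)). -/
open Finset

noncomputable section

/-- `cost(p,S) = min_{s ∈ S} ‖p - s‖²`. -/
noncomputable def pcost {d : ℕ} (p : Pt d) (S : Finset (Pt d)) : ℝ :=
  sInf ((fun s => ‖p - s‖ ^ 2) '' (S : Set (Pt d)))

/-- `cost(P,S) = ∑_{p ∈ P} min_{s ∈ S} ‖p - s‖²`. -/
noncomputable def scost {d : ℕ} (P S : Finset (Pt d)) : ℝ :=
  ∑ p ∈ P, pcost p S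

lemma pcost_nonneg {d : ℕ} (p : Pt d) (S : Finset (Pt d)) : 0 ≤ pcost p S := by
  apply Real.sInf_nonneg
  rintro x ⟨s, -, rfl⟩
  positivity

lemma pcost_le {d : ℕ} {p s : Pt d} {S : Finset (Pt d)} (hs : s ∈ S) :
    pcost p S ≤ ‖p - s‖ ^ 2 :=
  csInf_le ((S.finite_toSet.image _).bddBelow) ⟨s, hs, rfl⟩

lemma pcost_tri {d : ℕ} (x y : Pt d) (S : Finset (Pt d)) :
    pcost x S ≤ 2 * pcost y S + 2 * ‖x - y‖ ^ 2 := by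
  rcases S.eq_empty_or_nonempty with rfl | hS
  · simp only [pcost, coe_empty, Set.image_empty, Real.sInf_empty]
    positivity
  · have hne : ((fun s => ‖y - s‖ ^ 2) '' (S : Set (Pt d))).Nonempty :=
      ((Finset.coe_nonempty.mpr hS).image _)
    have hfin : ((fun s => ‖y - s‖ ^ 2) '' (S : Set (Pt d))).Finite :=
      S.finite_toSet.image _
    obtain ⟨s, hs, heq⟩ := hne.csInf_mem hfin
    have h1 : pcost x S ≤ ‖x - s‖ ^ 2 := pcost_le hs
    have h2 : pcost y S = ‖y - s‖ ^ 2 := heq.symm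
    have h3 : ‖x - s‖ ≤ ‖x - y‖ + ‖y - s‖ := by
      have : x - s = (x - y) + (y - s) := by abel
      rw [this]; exact norm_add_le _ _
    have h4 : ‖x - s‖ ^ 2 ≤ (‖x - y‖ + ‖y - s‖) ^ 2 := by
      apply pow_le_pow_left₀ (norm_nonneg _) h3
    nlinarith [sq_nonneg (‖x - y‖ - ‖y - s‖)]

set_option maxHeartbeats 1000000 in
/-- The key variance bound: under the sensitivity weight bounds and the size/cost
preservation properties (P1), (P3),
`∑_{q∈Ω} w_q²·err(q,S)² ≤ C·(cost(P,A)/m)·(cost(P,S) + cost(P,A))`. -/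
theorem err_variance_bound :
    ∃ C : ℝ, 0 < C ∧
      ∀ (d k m : ℕ) (ε : ℝ) (P : Finset (Pt d)) (cl : Pt d → Fin k)
        (a : Fin k → Pt d) (Ω : Finset (Pt d)) (w : Pt d → ℝ),
        0 < ε → ε ≤ 1 / 2 → Ω ⊆ P → (∀ q ∈ Ω, 0 ≤ w q) →
        -- notation
        (let Cj : Fin k → Finset (Pt d) := fun j => P.filter fun p => cl p = j
         let costC : Fin k → ℝ := fun j => ∑ p ∈ Cj j, ‖p - a j‖ ^ 2
         let costPA : ℝ := ∑ j : Fin k, costC j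
         let Δ : Pt d → ℝ := fun q => costC (cl q) / ((Cj (cl q)).card : ℝ)
         -- (i) the sensitivity-sampling weight bounds
         (∀ q ∈ Ω, w q * ‖q - a (cl q)‖ ^ 2 ≤ 4 * costPA / (m : ℝ) ∧
            w q * Δ q ≤ 4 * costPA / (m : ℝ)) →
         -- (ii) property (P1): cluster size preservation
         (∀ j : Fin k,
            (1 - ε) * (((Cj j).card : ℝ)) ≤ ∑ q ∈ Ω.filter (fun q => cl q = j), w q ∧
            ∑ q ∈ Ω.filter (fun q => cl q = j), w q ≤ (1 + ε) * (((Cj j).card : ℝ))) →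
         -- (iii) property (P3): cluster cost preservation
         (∀ j : Fin k,
            (1 - ε) * costC j ≤ ∑ q ∈ Ω.filter (fun q => cl q = j), w q * ‖q - a j‖ ^ 2 ∧
            ∑ q ∈ Ω.filter (fun q => cl q = j), w q * ‖q - a j‖ ^ 2 ≤ (1 + ε) * costC j) →
         ∀ S : Finset (Pt d),
           (∑ q ∈ Ω, (w q) ^ 2 *
              (Real.sqrt (pcost q S * ‖q - a (cl q)‖ ^ 2)
                + Real.sqrt (pcost q S * Δ q)
                + ‖q - a (cl q)‖ ^ 2 + Δ q) ^ 2)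
             ≤ C * (costPA / (m : ℝ)) * (scost P S + costPA)) := by
  refine ⟨336, by norm_num, ?_⟩
  intro d k m ε P cl a Ω w hε hε2 hΩP hw0
  intro Cj costC costPA Δ hsens hP1 hP3 S
  -- basic nonnegativity facts
  have hcostC0 : ∀ j, 0 ≤ costC j := fun j => by
    apply Finset.sum_nonneg; intro p _; positivity
  have hA0 : 0 ≤ costPA := Finset.sum_nonneg fun j _ => hcostC0 j
  have hT0 : 0 ≤ costPA / (m : ℝ) := div_nonneg hA0 (Nat.cast_nonneg m)
  have hS0 : 0 ≤ scost P S := Finset.sum_nonneg fun p _ => pcost_nonneg p S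
  have hΔ0 : ∀ q, 0 ≤ Δ q := fun q =>
    div_nonneg (hcostC0 _) (Nat.cast_nonneg _)
  set T : ℝ := costPA / (m : ℝ) with hT
  -- Step 1: pointwise bound
  have step1 : ∀ q ∈ Ω, (w q) ^ 2 *
      (Real.sqrt (pcost q S * ‖q - a (cl q)‖ ^ 2)
        + Real.sqrt (pcost q S * Δ q)
        + ‖q - a (cl q)‖ ^ 2 + Δ q) ^ 2
      ≤ 16 * T * (2 * (w q * pcost q S) + w q * ‖q - a (cl q)‖ ^ 2 + w q * Δ q) := by
    intro q hq
    obtain ⟨h1, h2⟩ := hsens q hq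
    have hw : 0 ≤ w q := hw0 q hq
    set p := pcost q S with hp'
    set c := ‖q - a (cl q)‖ ^ 2 with hc'
    set dd := Δ q with hd'
    have hp : 0 ≤ p := pcost_nonneg q S
    have hc : 0 ≤ c := by rw [hc']; exact sq_nonneg _
    have hd : 0 ≤ dd := hΔ0 q
    set A1 := Real.sqrt (p * c) with hA1
    set B1 := Real.sqrt (p * dd) with hB1
    have hA1sq : A1 ^ 2 = p * c := Real.sq_sqrt (mul_nonneg hp hc)
    have hB1sq : B1 ^ 2 = p * dd := Real.sq_sqrt (mul_nonneg hp hd)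
    have hA1n : 0 ≤ A1 := Real.sqrt_nonneg _
    have hB1n : 0 ≤ B1 := Real.sqrt_nonneg _
    have key1 : (A1 + B1 + c + dd) ^ 2 ≤ 4 * (A1 ^ 2 + B1 ^ 2 + c ^ 2 + dd ^ 2) := by
      nlinarith [sq_nonneg (A1 - B1), sq_nonneg (A1 - c), sq_nonneg (A1 - dd),
        sq_nonneg (B1 - c), sq_nonneg (B1 - dd), sq_nonneg (c - dd)]
    have h4T : 4 * T = 4 * costPA / (m : ℝ) := by rw [hT]; ring
    rw [← h4T] at h1 h2
    -- product bounds
    have hwp : 0 ≤ w q * p := mul_nonneg hw hp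
    have hwc : 0 ≤ w q * c := mul_nonneg hw hc
    have hwd : 0 ≤ w q * dd := mul_nonneg hw hd
    have b1 : (w q * p) * (w q * c) ≤ (w q * p) * (4 * T) :=
      mul_le_mul_of_nonneg_left h1 hwp
    have b2 : (w q * p) * (w q * dd) ≤ (w q * p) * (4 * T) :=
      mul_le_mul_of_nonneg_left h2 hwp
    have b3 : (w q * c) * (w q * c) ≤ (4 * T) * (w q * c) :=
      mul_le_mul_of_nonneg_right h1 hwc
    have b4 : (w q * dd) * (w q * dd) ≤ (4 * T) * (w q * dd) :=
      mul_le_mul_of_nonneg_right h2 hwd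
    have key2 : (w q) ^ 2 * (A1 + B1 + c + dd) ^ 2 ≤
        (w q) ^ 2 * (4 * (A1 ^ 2 + B1 ^ 2 + c ^ 2 + dd ^ 2)) :=
      mul_le_mul_of_nonneg_left key1 (sq_nonneg _)
    have key3 : (w q) ^ 2 * (4 * (A1 ^ 2 + B1 ^ 2 + c ^ 2 + dd ^ 2)) =
        4 * ((w q * p) * (w q * c) + (w q * p) * (w q * dd)
          + (w q * c) * (w q * c) + (w q * dd) * (w q * dd)) := by
      rw [hA1sq, hB1sq]; ring
    calc (w q) ^ 2 * (A1 + B1 + c + dd) ^ 2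
        ≤ 4 * ((w q * p) * (w q * c) + (w q * p) * (w q * dd)
          + (w q * c) * (w q * c) + (w q * dd) * (w q * dd)) := by
          rw [← key3]; exact key2
      _ ≤ 16 * T * (2 * (w q * p) + w q * c + w q * dd) := by nlinarith
  -- Step 2: sum the pointwise bound
  have step2 : (∑ q ∈ Ω, (w q) ^ 2 *
      (Real.sqrt (pcost q S * ‖q - a (cl q)‖ ^ 2)
        + Real.sqrt (pcost q S * Δ q)
        + ‖q - a (cl q)‖ ^ 2 + Δ q) ^ 2)
      ≤ 16 * T * (2 * (∑ q ∈ Ω, w q * pcost q S)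
          + (∑ q ∈ Ω, w q * ‖q - a (cl q)‖ ^ 2) + (∑ q ∈ Ω, w q * Δ q)) := by
    calc _ ≤ ∑ q ∈ Ω, 16 * T * (2 * (w q * pcost q S) + w q * ‖q - a (cl q)‖ ^ 2
          + w q * Δ q) := Finset.sum_le_sum step1
      _ = _ := by rw [← Finset.mul_sum]; congr 1
                  rw [Finset.sum_add_distrib, Finset.sum_add_distrib, Finset.mul_sum]
  -- unfold fibers
  have hfiber : ∀ (f : Pt d → ℝ),
      (∑ q ∈ Ω, f q) = ∑ j : Fin k, ∑ q ∈ Ω.filter (fun q => cl q = j), f q :=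
    fun f => (Finset.sum_fiberwise Ω cl f).symm
  have hmemfib : ∀ (j : Fin k) (q : Pt d), q ∈ Ω.filter (fun q => cl q = j) → cl q = j :=
    fun j q hq => (Finset.mem_filter.mp hq).2
  have hw0' : ∀ (j : Fin k), ∀ q ∈ Ω.filter (fun q => cl q = j), 0 ≤ w q :=
    fun j q hq => hw0 q (Finset.mem_filter.mp hq).1
  -- Step 3a: ∑ w·cost(q,A) ≤ (3/2) costPA
  have HcA : (∑ q ∈ Ω, w q * ‖q - a (cl q)‖ ^ 2) ≤ (3/2) * costPA := by
    rw [hfiber]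
    have : ∀ j : Fin k, (∑ q ∈ Ω.filter (fun q => cl q = j), w q * ‖q - a (cl q)‖ ^ 2)
        ≤ (3/2) * costC j := by
      intro j
      have e : (∑ q ∈ Ω.filter (fun q => cl q = j), w q * ‖q - a (cl q)‖ ^ 2)
          = ∑ q ∈ Ω.filter (fun q => cl q = j), w q * ‖q - a j‖ ^ 2 :=
        Finset.sum_congr rfl fun q hq => by rw [hmemfib j q hq]
      rw [e]
      have := (hP3 j).2
      nlinarith [hcostC0 j]
    calc _ ≤ ∑ j : Fin k, (3/2) * costC j := Finset.sum_le_sum fun j _ => this j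
      _ = (3/2) * costPA := by rw [← Finset.mul_sum]
  -- Step 3b: ∑ w·Δ ≤ (3/2) costPA
  have HΔ : (∑ q ∈ Ω, w q * Δ q) ≤ (3/2) * costPA := by
    rw [hfiber]
    have : ∀ j : Fin k, (∑ q ∈ Ω.filter (fun q => cl q = j), w q * Δ q)
        ≤ (3/2) * costC j := by
      intro j
      have e : (∑ q ∈ Ω.filter (fun q => cl q = j), w q * Δ q)
          = (∑ q ∈ Ω.filter (fun q => cl q = j), w q) * (costC j / ((Cj j).card : ℝ)) := by
        rw [Finset.sum_mul]
        refine Finset.sum_congr rfl fun q hq => ?_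
        simp only [Δ]
        rw [hmemfib j q hq]
      rw [e]
      by_cases hcard : ((Cj j).card : ℝ) = 0
      · have hCe : Cj j = ∅ := Finset.card_eq_zero.mp (Nat.cast_eq_zero.mp hcard)
        have hc0 : costC j = 0 := by simp only [costC, hCe, Finset.sum_empty]
        simp [hc0]
      · have hpos : (0:ℝ) < ((Cj j).card : ℝ) :=
          lt_of_le_of_ne (Nat.cast_nonneg _) (Ne.symm hcard)
        have hq0 : 0 ≤ costC j / ((Cj j).card : ℝ) := div_nonneg (hcostC0 j) hpos.le
        calc (∑ q ∈ Ω.filter (fun q => cl q = j), w q) * (costC j / ((Cj j).card : ℝ))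
            ≤ ((1 + ε) * ((Cj j).card : ℝ)) * (costC j / ((Cj j).card : ℝ)) :=
              mul_le_mul_of_nonneg_right (hP1 j).2 hq0
          _ = (1 + ε) * costC j := by field_simp
          _ ≤ (3/2) * costC j := by nlinarith [hcostC0 j]
    calc _ ≤ ∑ j : Fin k, (3/2) * costC j := Finset.sum_le_sum fun j _ => this j
      _ = (3/2) * costPA := by rw [← Finset.mul_sum]
  -- Step 3c: ∑ w·pcost q S ≤ 9 (scost + costPA)
  have HpS : (∑ q ∈ Ω, w q * pcost q S) ≤ 9 * (scost P S + costPA) := by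
    have ptw : ∀ q ∈ Ω, w q * pcost q S ≤
        2 * (w q * pcost (a (cl q)) S) + 2 * (w q * ‖q - a (cl q)‖ ^ 2) := by
      intro q hq
      have h := pcost_tri q (a (cl q)) S
      have hw := hw0 q hq
      calc w q * pcost q S
          ≤ w q * (2 * pcost (a (cl q)) S + 2 * ‖q - a (cl q)‖ ^ 2) :=
            mul_le_mul_of_nonneg_left h hw
        _ = 2 * (w q * pcost (a (cl q)) S) + 2 * (w q * ‖q - a (cl q)‖ ^ 2) := by ring
    have split : (∑ q ∈ Ω, w q * pcost q S) ≤
        2 * (∑ q ∈ Ω, w q * pcost (a (cl q)) S)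
          + 2 * (∑ q ∈ Ω, w q * ‖q - a (cl q)‖ ^ 2) := by
      calc (∑ q ∈ Ω, w q * pcost q S)
          ≤ ∑ q ∈ Ω, (2 * (w q * pcost (a (cl q)) S) + 2 * (w q * ‖q - a (cl q)‖ ^ 2)) :=
            Finset.sum_le_sum ptw
        _ = _ := by rw [Finset.sum_add_distrib, ← Finset.mul_sum, ← Finset.mul_sum]
    -- bound B := ∑ w q * pcost (a (cl q)) S
    have HB : (∑ q ∈ Ω, w q * pcost (a (cl q)) S) ≤
        (3/2) * (2 * scost P S + 2 * costPA) := by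
      rw [hfiber]
      have perj : ∀ j : Fin k, (∑ q ∈ Ω.filter (fun q => cl q = j), w q * pcost (a (cl q)) S)
          ≤ (3/2) * (2 * (∑ p ∈ Cj j, pcost p S) + 2 * costC j) := by
        intro j
        have e : (∑ q ∈ Ω.filter (fun q => cl q = j), w q * pcost (a (cl q)) S)
            = (∑ q ∈ Ω.filter (fun q => cl q = j), w q) * pcost (a j) S := by
          rw [Finset.sum_mul]
          exact Finset.sum_congr rfl fun q hq => by rw [hmemfib j q hq]
        rw [e]
        have hp0 : 0 ≤ pcost (a j) S := pcost_nonneg _ _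
        have Bj : ((Cj j).card : ℝ) * pcost (a j) S
            ≤ 2 * (∑ p ∈ Cj j, pcost p S) + 2 * costC j := by
          have e2 : ((Cj j).card : ℝ) * pcost (a j) S = ∑ p ∈ Cj j, pcost (a j) S := by
            rw [Finset.sum_const, nsmul_eq_mul]
          rw [e2]
          calc ∑ p ∈ Cj j, pcost (a j) S
              ≤ ∑ p ∈ Cj j, (2 * pcost p S + 2 * ‖p - a j‖ ^ 2) :=
                Finset.sum_le_sum fun p hp => by
                  have h := pcost_tri (a j) p S
                  rw [norm_sub_rev] at h
                  exact h
            _ = 2 * (∑ p ∈ Cj j, pcost p S) + 2 * costC j := by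
                rw [Finset.sum_add_distrib, ← Finset.mul_sum, ← Finset.mul_sum]
        have hcard0 : (0:ℝ) ≤ ((Cj j).card : ℝ) := Nat.cast_nonneg _
        have hsw : (∑ q ∈ Ω.filter (fun q => cl q = j), w q) * pcost (a j) S
            ≤ ((1 + ε) * ((Cj j).card : ℝ)) * pcost (a j) S :=
          mul_le_mul_of_nonneg_right (hP1 j).2 hp0
        have h15 : ((1 + ε) * ((Cj j).card : ℝ)) * pcost (a j) S
            ≤ (3/2) * (((Cj j).card : ℝ) * pcost (a j) S) := by
          nlinarith [mul_nonneg hcard0 hp0]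
        have h16 : (3/2) * (((Cj j).card : ℝ) * pcost (a j) S)
            ≤ (3/2) * (2 * (∑ p ∈ Cj j, pcost p S) + 2 * costC j) := by linarith
        linarith
      have hscost : (∑ j : Fin k, ∑ p ∈ Cj j, pcost p S) = scost P S := by
        simp only [Cj, scost]
        exact Finset.sum_fiberwise P cl (fun p => pcost p S)
      calc (∑ j : Fin k, ∑ q ∈ Ω.filter (fun q => cl q = j), w q * pcost (a (cl q)) S)
          ≤ ∑ j : Fin k, (3/2) * (2 * (∑ p ∈ Cj j, pcost p S) + 2 * costC j) :=
            Finset.sum_le_sum fun j _ => perj j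
        _ = (3/2) * (2 * scost P S + 2 * costPA) := by
            rw [← Finset.mul_sum, Finset.sum_add_distrib, ← Finset.mul_sum,
              ← Finset.mul_sum, hscost]
    linarith
  -- combine
  calc (∑ q ∈ Ω, (w q) ^ 2 *
      (Real.sqrt (pcost q S * ‖q - a (cl q)‖ ^ 2)
        + Real.sqrt (pcost q S * Δ q)
        + ‖q - a (cl q)‖ ^ 2 + Δ q) ^ 2)
      ≤ 16 * T * (2 * (∑ q ∈ Ω, w q * pcost q S)
          + (∑ q ∈ Ω, w q * ‖q - a (cl q)‖ ^ 2) + (∑ q ∈ Ω, w q * Δ q)) := step2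
    _ ≤ 336 * T * (scost P S + costPA) := by
        have hsum0 : 0 ≤ ∑ q ∈ Ω, w q * pcost q S :=
          Finset.sum_nonneg fun q hq => mul_nonneg (hw0 q hq) (pcost_nonneg q S)
        nlinarith [mul_nonneg hT0 hS0, mul_nonneg hT0 hA0,
          mul_le_mul_of_nonneg_left HpS hT0, mul_le_mul_of_nonneg_left HcA hT0,
          mul_le_mul_of_nonneg_left HΔ hT0]
end
end
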